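/- arXiv:1802.01138 — 2 statements merged into one kernel-verified Lean document; each statement's English description precedes it below -/
import Mathlib

section
/- Correctness of Paillier decryption with g = 1+N: let N = PQ (P ≠ Q odd primes, gcd(N, λ) = 1, λ = lcm(P−1,Q−1)), let L(u) = (u−1)/N for u ≡ 1 (mod N), and μ = (L((1+N)^λ mod N²))⁻¹ mod N. Then for every m ∈ Z_N and r ∈ (Z/N)^×, with c = (1+N)^m r^N mod N², one has L(c^λ mod N²) · μ ≡ m (mod N). -/
lemma paillier_sq_zero_pow {R : Type*} [CommRing R] (x : R) (hx : x * x = 0) (k : ℕ) :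
    (1 + x) ^ k = 1 + (k : R) * x := by
  induction k with
  | zero => simp
  | succ n ih =>
    rw [pow_succ, ih]
    push_cast
    ring_nf
    rw [show x ^ 2 = 0 by rw [pow_two]; exact hx]
    ring

lemma paillier_NN_zero (N : ℕ) : (N : ZMod (N ^ 2)) * N = 0 := by
  rw [← Nat.cast_mul, ← pow_two]; exact ZMod.natCast_self _

lemma paillier_val_one_add (N : ℕ) (hN1 : 1 < N) (k : ℕ) :
    ((1 : ZMod (N ^ 2)) + (k : ZMod (N ^ 2)) * N).val = 1 + (k % N) * N := by
  have hNpos : 0 < N := by omega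
  have h1 : (k : ZMod (N ^ 2)) * N = ((k % N : ℕ) : ZMod (N ^ 2)) * N := by
    have e : (k : ZMod (N ^ 2))
        = ((k % N : ℕ) : ZMod (N ^ 2)) + (N : ZMod (N ^ 2)) * ((k / N : ℕ) : ZMod (N ^ 2)) := by
      rw [← Nat.cast_mul, ← Nat.cast_add, Nat.mod_add_div]
    rw [e, add_mul, mul_comm (N : ZMod (N ^ 2)) ((k / N : ℕ) : ZMod (N ^ 2)), mul_assoc,
      paillier_NN_zero, mul_zero, add_zero]
  rw [h1]
  have h2 : ((1 : ZMod (N ^ 2)) + ((k % N : ℕ) : ZMod (N ^ 2)) * N)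
      = ((1 + (k % N) * N : ℕ) : ZMod (N ^ 2)) := by push_cast; ring
  rw [h2, ZMod.val_natCast, Nat.mod_eq_of_lt]
  have hk : k % N + 1 ≤ N := Nat.mod_lt k hNpos
  have h3 : (k % N + 1) * N ≤ N * N := Nat.mul_le_mul_right N hk
  rw [pow_two]
  nlinarith

/-- Correctness of Paillier decryption with `g = 1 + N`. -/
theorem paillier_decryption_correct (P Q : ℕ) (hP : P.Prime) (hQ : Q.Prime)
    (hPodd : Odd P) (hQodd : Odd Q) (hne : P ≠ Q)
    (N : ℕ) (hN : N = P * Q)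
    (lam : ℕ) (hlam : lam = Nat.lcm (P - 1) (Q - 1)) (hco : N.Coprime lam)
    (L : ℕ → ℕ) (hL : ∀ u, L u = (u - 1) / N)
    (mu : ℕ) (hmu : (L (((1 + (N : ZMod (N ^ 2))) ^ lam).val) * mu) % N = 1 % N)
    (m r : ℕ) (hm : m < N) (hr : r.Coprime N)
    (c : ZMod (N ^ 2))
    (hc : c = (1 + (N : ZMod (N ^ 2))) ^ m * (r : ZMod (N ^ 2)) ^ N) :
    (L ((c ^ lam).val) * mu) % N = m := by
  have hP2 : 2 ≤ P := hP.two_le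
  have hQ2 : 2 ≤ Q := hQ.two_le
  have hN1 : 1 < N := by rw [hN]; nlinarith
  have hNpos : 0 < N := by omega
  have hpow := paillier_sq_zero_pow (N : ZMod (N ^ 2)) (paillier_NN_zero N)
  -- r ^ (N * lam) ≡ 1 [MOD N ^ 2]
  have hrP : r.Coprime P := Nat.Coprime.coprime_dvd_right ⟨Q, hN⟩ hr
  have hrQ : r.Coprime Q := Nat.Coprime.coprime_dvd_right ⟨P, by rw [hN, mul_comm]⟩ hr
  have hmodP : r ^ (N * lam) ≡ 1 [MOD P ^ 2] := by
    have hdvd : P * (P - 1) ∣ N * lam :=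
      mul_dvd_mul ⟨Q, hN⟩ (hlam ▸ Nat.dvd_lcm_left _ _)
    obtain ⟨k, hk⟩ := hdvd
    have htot : Nat.totient (P ^ 2) = P * (P - 1) := by
      rw [Nat.totient_prime_pow hP (by norm_num)]; ring_nf
    have he : r ^ (P * (P - 1)) ≡ 1 [MOD P ^ 2] := by
      rw [← htot]
      exact Nat.ModEq.pow_totient (hrP.pow_right 2)
    calc r ^ (N * lam) = (r ^ (P * (P - 1))) ^ k := by rw [← pow_mul, hk]
      _ ≡ 1 ^ k [MOD P ^ 2] := he.pow k
      _ = 1 := one_pow k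
  have hmodQ : r ^ (N * lam) ≡ 1 [MOD Q ^ 2] := by
    have hdvd : Q * (Q - 1) ∣ N * lam :=
      mul_dvd_mul ⟨P, by rw [hN, mul_comm]⟩ (hlam ▸ Nat.dvd_lcm_right _ _)
    obtain ⟨k, hk⟩ := hdvd
    have htot : Nat.totient (Q ^ 2) = Q * (Q - 1) := by
      rw [Nat.totient_prime_pow hQ (by norm_num)]; ring_nf
    have he : r ^ (Q * (Q - 1)) ≡ 1 [MOD Q ^ 2] := by
      rw [← htot]
      exact Nat.ModEq.pow_totient (hrQ.pow_right 2)
    calc r ^ (N * lam) = (r ^ (Q * (Q - 1))) ^ k := by rw [← pow_mul, hk]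
      _ ≡ 1 ^ k [MOD Q ^ 2] := he.pow k
      _ = 1 := one_pow k
  have hPQco : (P ^ 2).Coprime (Q ^ 2) :=
    ((Nat.coprime_primes hP hQ).mpr hne).pow 2 2
  have hmodN2 : r ^ (N * lam) ≡ 1 [MOD N ^ 2] := by
    have h := (Nat.modEq_and_modEq_iff_modEq_mul hPQco).mp ⟨hmodP, hmodQ⟩
    have hNe : N ^ 2 = P ^ 2 * Q ^ 2 := by rw [hN]; ring
    rwa [hNe]
  have hr1 : ((r : ZMod (N ^ 2))) ^ (N * lam) = 1 := by
    have h := (ZMod.natCast_eq_natCast_iff _ _ _).mpr hmodN2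
    push_cast at h
    simpa using h
  -- compute c ^ lam
  have hclam : c ^ lam = 1 + ((m * lam : ℕ) : ZMod (N ^ 2)) * N := by
    rw [hc, mul_pow, ← pow_mul, ← pow_mul, hr1, mul_one, hpow]
  -- L values
  have hLval : ∀ k : ℕ, L (((1 : ZMod (N^2)) + (k : ZMod (N^2)) * N).val) = k % N := by
    intro k
    rw [paillier_val_one_add N hN1 k, hL]
    simp [Nat.mul_div_cancel _ hNpos]
  have hmu' : (lam % N * mu) % N = 1 % N := by
    have h := hmu
    rw [hpow] at h
    rwa [hLval] at h
  have hgoal : L ((c ^ lam).val) = (m * lam) % N := by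
    rw [hclam]; exact hLval (m * lam)
  rw [hgoal]
  -- arithmetic
  have h1 : (m * lam % N * mu) % N = (m * lam * mu) % N := by
    rw [Nat.mod_mul_mod]
  have h2 : (lam * mu) % N = 1 % N := by
    rw [← Nat.mod_mul_mod]; exact hmu'
  rw [h1, mul_assoc, Nat.mul_mod, h2, ← Nat.mul_mod, mul_one, Nat.mod_eq_of_lt hm]
end

section
/- In mOPE₂ with order range {0,…,M}: if M ≥ 2^h − 1 and at most 2^h − 1 values are inserted in any order without triggering more than the allowed recursion depth (i.e., every insertion finds y_r − y_l ≥ 2), then all assigned orders are distinct and the map from inserted plaintexts to orders is strictly increasing on distinct plaintexts (for a deterministic scheme: x < x' implies y(x) < y(x'), and x = x' implies y(x) = y(x')). -/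
/-- The state of mOPE₂ is strictly order-preserving: equal plaintexts get equal
orders and strictly smaller plaintexts get strictly smaller orders. -/
def Mono (s : List (ℤ × ℤ)) : Prop :=
  ∀ p ∈ s, ∀ q ∈ s, (p.1 < q.1 → p.2 < q.2) ∧ (p.1 = q.1 → p.2 = q.2)

lemma ceil_half_bounds (a b : ℤ) (hg : b - a ≥ 2) :
    1 ≤ ⌈((b : ℚ) - a) / 2⌉ ∧ ⌈((b : ℚ) - a) / 2⌉ ≤ b - a - 1 := by
  have hq : (2 : ℚ) ≤ (b : ℚ) - a := by exact_mod_cast hg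
  constructor
  · have h1 : (1 : ℚ) ≤ ((b : ℚ) - a) / 2 := by linarith
    calc (1 : ℤ) = ⌈(1 : ℚ)⌉ := by simp
      _ ≤ _ := Int.ceil_le_ceil h1
  · rw [Int.ceil_le]
    push_cast
    linarith

/-- mOPE₂ insertion preserves strict order preservation: inserting a new
plaintext `x̄` between consecutive state entries `⟨xᵢ, yᵢ⟩`, `⟨xᵢ₊₁, yᵢ₊₁⟩` with
`xᵢ ≤ x̄ < xᵢ₊₁`, where the assigned order is `yᵢ` if `x̄ = xᵢ` and
`yᵢ + ⌈(yᵢ₊₁ − yᵢ)/2⌉` otherwise (the gap satisfying `yᵢ₊₁ − yᵢ ≥ 2`), keeps the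
plaintext-to-order map injective on distinct plaintexts and strictly
increasing. -/
theorem mope2_insert_preserves_mono (s : List (ℤ × ℤ)) (hmono : Mono s)
    (xi yi xi1 yi1 : ℤ) (hin : (xi, yi) ∈ s) (hin1 : (xi1, yi1) ∈ s)
    (hconsec : ∀ p ∈ s, p.1 ≤ xi ∨ xi1 ≤ p.1)
    (xbar : ℤ) (hx1 : xi ≤ xbar) (hx2 : xbar < xi1)
    (hgap : xbar ≠ xi → yi1 - yi ≥ 2)
    (ybar : ℤ)
    (hybar : ybar = if xbar = xi then yi else yi + ⌈((yi1 - yi : ℚ)) / 2⌉) :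
    Mono ((xbar, ybar) :: s) := by
  have hylt : yi < yi1 := (hmono _ hin _ hin1).1 (lt_of_le_of_lt hx1 hx2)
  -- key bounds on ybar
  have hyb1 : yi ≤ ybar ∧ ybar < yi1 ∧ (xbar ≠ xi → yi < ybar) ∧ (xbar = xi → ybar = yi) := by
    by_cases hxe : xbar = xi
    · rw [hybar, if_pos hxe]
      exact ⟨le_refl _, hylt, fun h => absurd hxe h, fun _ => rfl⟩
    · rw [hybar, if_neg hxe]
      have hg := hgap hxe
      obtain ⟨hc1, hc2⟩ := ceil_half_bounds yi yi1 hg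
      exact ⟨by omega, by omega, fun _ => by omega, fun h => absurd h hxe⟩
  obtain ⟨hb1, hb2, hb3, hb4⟩ := hyb1
  -- for any entry in s, relate to ybar
  have hlow : ∀ p ∈ s, (p.1 < xbar → p.2 < ybar) ∧ (p.1 = xbar → p.2 = ybar) ∧
      (xbar < p.1 → ybar < p.2) := by
    intro p hp
    rcases hconsec p hp with h | h
    · have h1 := hmono p hp _ hin
      simp only at h1
      refine ⟨fun hlt => ?_, fun heq => ?_, fun hgt => by omega⟩
      · rcases lt_or_eq_of_le h with h' | h'
        · exact lt_of_lt_of_le (h1.1 h') hb1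
        · -- p.1 = xi, p.2 = yi, and p.1 < xbar so xbar ≠ xi
          have hp2 : p.2 = yi := h1.2 h'
          have hne : xbar ≠ xi := by omega
          rw [hp2]; exact hb3 hne
      · have hpxi : p.1 = xi := le_antisymm h (heq ▸ hx1)
        have hp2 : p.2 = yi := h1.2 hpxi
        have hxe : xbar = xi := by omega
        rw [hp2, hb4 hxe]
    · have h1 := hmono _ hin1 p hp
      simp only at h1
      refine ⟨fun hlt => by omega, fun heq => by omega, fun _ => ?_⟩
      rcases lt_or_eq_of_le h with h' | h'
      · exact lt_trans hb2 (h1.1 h')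
      · have : yi1 = p.2 := h1.2 h'
        omega
  intro p hp q hq
  rcases List.mem_cons.mp hp with hp' | hp' <;> rcases List.mem_cons.mp hq with hq' | hq'
  · subst hp'; subst hq'; exact ⟨fun h => absurd h (lt_irrefl _), fun _ => rfl⟩
  · subst hp'
    obtain ⟨a, b, c⟩ := hlow q hq'
    exact ⟨fun h => c h, fun h => (b h.symm).symm⟩
  · subst hq'
    obtain ⟨a, b, c⟩ := hlow p hp'
    exact ⟨a, b⟩
  · exact hmono p hp' q hq'
end
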